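/- Let A be a measurement with n outcomes on ℂ^d such that every effect A x is a nonzero orthogonal projection (A x is Hermitian and A x * A x = A x). Then F(A) is an orthogonal projection of rank n: F(A) is Hermitian, F(A) * F(A) = F(A), and Matrix.rank (F(A)) = n. -/

import Mathlib

open Matrix
open scoped Kronecker ComplexOrder

noncomputable section

/-- A measurement (POVM): a finite family of positive semidefinite matrices summing to `1`. -/
def IsMeasurement {ι κ : Type*} [Fintype ι] [DecidableEq ι] [Fintype κ]
    (A : κ → Matrix ι ι ℂ) : Prop :=
  (∀ x, (A x).PosSemidef) ∧ ∑ x, A x = 1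

/-- `A` is a post-processing of `B`: `A ⪯ B`. -/
def PostProc {ι : Type*} {n m : ℕ}
    (A : Fin n → Matrix ι ι ℂ) (B : Fin m → Matrix ι ι ℂ) : Prop :=
  ∃ μ : Fin n → Fin m → ℝ,
    (∀ x y, 0 ≤ μ x y) ∧ (∀ y, ∑ x, μ x y = 1) ∧
    (∀ x, A x = ∑ y, (μ x y : ℂ) • B y)

/-- The outer product `|E⟩⟨F|` of the vectorizations of two matrices. -/
def outerProd {ι : Type*} (E F : Matrix ι ι ℂ) : Matrix (ι × ι) (ι × ι) ℂ :=
  Matrix.of fun p q => E p.1 p.2 * star (F q.1 q.2)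

/-- The (un-normalized) Fisher information map of a measurement. -/
noncomputable def Fisher {ι κ : Type*} [Fintype ι] [Fintype κ]
    (A : κ → Matrix ι ι ℂ) : Matrix (ι × ι) (ι × ι) ℂ :=
  ∑ x, (Matrix.trace (A x))⁻¹ • outerProd (A x) (A x)

/-- The generalized Fisher information map of a measurement, relative to a
positive definite state `ρ` (with positive semidefinite square root `ρ^{1/2}`). -/
noncomputable def FisherRho {ι κ : Type*} [Fintype ι] [DecidableEq ι] [Fintype κ]
    {ρ : Matrix ι ι ℂ} (hρ : ρ.PosDef) (A : κ → Matrix ι ι ℂ) :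
    Matrix (ι × ι) (ι × ι) ℂ :=
  ∑ x, (Matrix.trace (ρ * A x))⁻¹ •
    outerProd ((hρ.posSemidef.1.eigenvectorUnitary.1 *
        diagonal ((↑) ∘ (Real.sqrt ∘ hρ.posSemidef.1.eigenvalues)) *
        (star hρ.posSemidef.1.eigenvectorUnitary : Matrix ι ι ℂ)) * A x)
      ((hρ.posSemidef.1.eigenvectorUnitary.1 *
        diagonal ((↑) ∘ (Real.sqrt ∘ hρ.posSemidef.1.eigenvalues)) *
        (star hρ.posSemidef.1.eigenvectorUnitary : Matrix ι ι ℂ)) * A x)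

/-- The height of a finite family of self-adjoint matrices: the infimum of the traces of
Hermitian matrices dominating every member in the Loewner order. -/
noncomputable def height {ι κ : Type*} [Fintype ι] [Fintype κ]
    (X : κ → Matrix ι ι ℂ) : ℝ :=
  sInf { t : ℝ | ∃ H : Matrix ι ι ℂ, H.IsHermitian ∧
    (∀ i, (H - X i).PosSemidef) ∧ t = (Matrix.trace H).re }
-- outer product multiplication
lemma outer_mul_outer {d : ℕ} (E F G H : Matrix (Fin d) (Fin d) ℂ) :
    outerProd E F * outerProd G H = Matrix.trace (Fᴴ * G) • outerProd E H := by
  ext p q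
  simp only [Matrix.mul_apply, outerProd, of_apply, Matrix.smul_apply, smul_eq_mul,
    Matrix.trace, Matrix.diag, conjTranspose_apply]
  rw [Fintype.sum_prod_type, Finset.sum_mul, Finset.sum_comm]
  refine Finset.sum_congr rfl fun i _ => ?_
  rw [Finset.sum_mul]
  refine Finset.sum_congr rfl fun j _ => ?_
  ring

lemma trace_sq {d : ℕ} (M : Matrix (Fin d) (Fin d) ℂ) :
    Matrix.trace (Mᴴ * M) = ((∑ i, ∑ j, Complex.normSq (M i j) : ℝ) : ℂ) := by
  push_cast
  simp only [Matrix.trace, Matrix.diag, Matrix.mul_apply, conjTranspose_apply]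
  rw [Finset.sum_comm]
  refine Finset.sum_congr rfl fun i _ => Finset.sum_congr rfl fun j _ => ?_
  rw [Complex.star_def, ← Complex.normSq_eq_conj_mul_self]

lemma rank_eq_trace_of_idem {m : Type*} [Fintype m] [DecidableEq m]
    {P : Matrix m m ℂ} (h : P * P = P) : (P.rank : ℂ) = Matrix.trace P := by
  set f := P.mulVecLin with hf
  have hff : f ∘ₗ f = f := by rw [hf, ← Matrix.mulVecLin_mul, h]
  have hproj : LinearMap.IsProj (LinearMap.range f) f := by
    refine ⟨fun x => LinearMap.mem_range_self f x, fun x hx => ?_⟩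
    obtain ⟨y, rfl⟩ := hx
    exact LinearMap.ext_iff.mp hff y
  have ht := hproj.trace
  have : LinearMap.trace ℂ (m → ℂ) f = Matrix.trace P := by
    rw [LinearMap.trace_eq_matrix_trace ℂ (Pi.basisFun ℂ m) f,
      LinearMap.toMatrix_eq_toMatrix', hf, ← Matrix.toLin'_apply',
      LinearMap.toMatrix'_toLin']
  rw [← this, ht, Matrix.rank]

/-- For a sharp measurement, the Fisher information matrix is an orthogonal projection
of rank equal to the number of outcomes. -/
theorem stmt10 {d n : ℕ} (A : Fin n → Matrix (Fin d) (Fin d) ℂ)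
    (hA : IsMeasurement A) (hA0 : ∀ x, A x ≠ 0)
    (hproj : ∀ x, (A x).IsHermitian ∧ A x * A x = A x) :
    (Fisher A).IsHermitian ∧ Fisher A * Fisher A = Fisher A ∧
      (Fisher A).rank = n := by
  have hAtr : ∀ x, Matrix.trace (A x)
      = ((∑ i, ∑ j, Complex.normSq (A x i j) : ℝ) : ℂ) := by
    intro x
    have h1 : Matrix.trace ((A x)ᴴ * A x) = Matrix.trace (A x) := by
      rw [(hproj x).1, (hproj x).2]
    rw [← h1, trace_sq]
  have htne : ∀ x, Matrix.trace (A x) ≠ 0 := by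
    intro x h
    rw [hAtr x] at h
    have h2 : ∑ i, ∑ j, Complex.normSq (A x i j) = 0 := by exact_mod_cast h
    refine hA0 x ?_
    ext i j
    have hnn : ∀ i ∈ (Finset.univ : Finset (Fin d)),
        0 ≤ ∑ j, Complex.normSq (A x i j) :=
      fun i _ => Finset.sum_nonneg fun j _ => Complex.normSq_nonneg _
    have h3 := (Finset.sum_eq_zero_iff_of_nonneg hnn).mp h2 i (Finset.mem_univ i)
    have h4 := (Finset.sum_eq_zero_iff_of_nonneg
      (fun j _ => Complex.normSq_nonneg (A x i j))).mp h3 j (Finset.mem_univ j)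
    simpa using Complex.normSq_eq_zero.mp h4
  have hterm : ∀ x y, Matrix.trace (A x * A y)
      = ((∑ i, ∑ j, Complex.normSq ((A y * A x) i j) : ℝ) : ℂ) := by
    intro x y
    have e1 : (A y * A x)ᴴ * (A y * A x) = A x * A y * A x := by
      rw [Matrix.conjTranspose_mul, (hproj x).1, (hproj y).1, Matrix.mul_assoc,
        ← Matrix.mul_assoc (A y) (A y) (A x), (hproj y).2, ← Matrix.mul_assoc]
    have e2 : Matrix.trace (A x * A y * A x) = Matrix.trace (A x * A y) := by
      rw [Matrix.trace_mul_comm, ← Matrix.mul_assoc, (hproj x).2]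
    rw [← e2, ← e1, trace_sq]
  have horth : ∀ x y, y ≠ x → Matrix.trace (A x * A y) = 0 := by
    intro x y hyx
    have h1 : ∑ z, Matrix.trace (A x * A z) = Matrix.trace (A x) := by
      rw [← Matrix.trace_sum, ← Finset.mul_sum, hA.2, mul_one]
    have h2 : ∑ z ∈ Finset.univ.erase x, Matrix.trace (A x * A z) = 0 := by
      have := Finset.add_sum_erase Finset.univ (fun z => Matrix.trace (A x * A z))
        (Finset.mem_univ x)
      rw [h1] at this
      have hbeta : (fun z => Matrix.trace (A x * A z)) x = Matrix.trace (A x) := by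
        simp [(hproj x).2]
      rw [(hproj x).2] at this
      linear_combination this
    have h3 : ((∑ z ∈ Finset.univ.erase x,
        ∑ i, ∑ j, Complex.normSq ((A z * A x) i j) : ℝ) : ℂ) = 0 := by
      push_cast
      rw [← h2]
      exact Finset.sum_congr rfl fun z _ => by rw [hterm x z]; push_cast; ring
    have h4 : (∑ z ∈ Finset.univ.erase x,
        ∑ i, ∑ j, Complex.normSq ((A z * A x) i j) : ℝ) = 0 := by exact_mod_cast h3
    have h5 := (Finset.sum_eq_zero_iff_of_nonneg (fun z _ =>
      Finset.sum_nonneg fun i _ => Finset.sum_nonneg fun j _ =>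
        Complex.normSq_nonneg _)).mp h4 y (Finset.mem_erase.mpr ⟨hyx, Finset.mem_univ y⟩)
    rw [hterm x y, h5]
    norm_num
  have hmul : ∀ x y, outerProd (A x) (A x) * outerProd (A y) (A y)
      = Matrix.trace (A x * A y) • outerProd (A x) (A y) := by
    intro x y
    rw [outer_mul_outer, (hproj x).1]
  have hOherm : ∀ x, (outerProd (A x) (A x)).IsHermitian := by
    intro x
    ext p q
    simp only [conjTranspose_apply, outerProd, of_apply, star_mul', star_star]
    ring
  have hcre : ∀ x, star (Matrix.trace (A x))⁻¹ = (Matrix.trace (A x))⁻¹ := by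
    intro x
    rw [hAtr x, star_inv₀, Complex.star_def, Complex.conj_ofReal]
  have hidem : Fisher A * Fisher A = Fisher A := by
    rw [Fisher, Finset.sum_mul_sum]
    refine Finset.sum_congr rfl fun x _ => ?_
    rw [Finset.sum_eq_single x]
    · rw [Matrix.smul_mul, Matrix.mul_smul, hmul x x, smul_smul, smul_smul, (hproj x).2,
        mul_assoc, inv_mul_cancel₀ (htne x), mul_one]
    · intro y _ hyx
      rw [Matrix.smul_mul, Matrix.mul_smul, hmul x y, horth x y hyx]
      simp
    · intro hx; exact absurd (Finset.mem_univ x) hx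
  refine ⟨?_, hidem, ?_⟩
  · rw [Matrix.IsHermitian, Fisher, Matrix.conjTranspose_sum]
    refine Finset.sum_congr rfl fun x _ => ?_
    rw [Matrix.conjTranspose_smul, hcre x, (hOherm x)]
  · have hr := rank_eq_trace_of_idem hidem
    have htrF : Matrix.trace (Fisher A) = (n : ℂ) := by
      rw [Fisher, Matrix.trace_sum]
      have : ∀ x : Fin n, Matrix.trace ((Matrix.trace (A x))⁻¹ • outerProd (A x) (A x))
          = 1 := by
        intro x
        rw [Matrix.trace_smul]
        have hO : Matrix.trace (outerProd (A x) (A x)) = Matrix.trace (A x) := by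
          rw [hAtr x]
          simp only [Matrix.trace, Matrix.diag, outerProd, of_apply]
          rw [Fintype.sum_prod_type]
          push_cast
          refine Finset.sum_congr rfl fun i _ => Finset.sum_congr rfl fun j _ => ?_
          rw [← Complex.mul_conj]
          rfl
        rw [hO, smul_eq_mul, inv_mul_cancel₀ (htne x)]
      rw [Finset.sum_congr rfl fun x _ => this x]
      simp
    rw [htrF] at hr
    exact_mod_cast hr
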